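/- If a point of a strictly convex subset S of a normed space (here: the set of linear isometric embeddings O(g,e), contained in the sphere of radius √d) is the barycenter of a probability measure μ supported on S, and S lies on a sphere, then μ must be a Dirac mass at that point: explicitly, if μ is a Borel probability measure on the sphere { x : ‖x‖ = r } in a real inner product space and ∫ x dμ(x) also has norm r, then μ = δ_{∫ x dμ}. -/

import Mathlib

open MeasureTheory

/-- if a Borel probability measure `μ` on a real inner product space is
supported on the sphere of radius `r > 0` and its barycenter `∫ x dμ` also has norm `r`,
then `μ` is the Dirac mass at the barycenter. -/
theorem measure_on_sphere_barycenter_norm_eq_dirac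
    {H : Type*} [NormedAddCommGroup H] [InnerProductSpace ℝ H] [FiniteDimensional ℝ H]
    [MeasurableSpace H] [BorelSpace H]
    (r : ℝ) (hr : 0 < r) (μ : Measure H) [IsProbabilityMeasure μ]
    (hsupp : ∀ᵐ x ∂μ, ‖x‖ = r)
    (hb : ‖∫ x, x ∂μ‖ = r) :
    μ = Measure.dirac (∫ x, x ∂μ) := by
  set b := ∫ x, x ∂μ with hbdef
  have hint : Integrable (fun x : H => x) μ := by
    refine ⟨measurable_id.aestronglyMeasurable, ?_⟩
    exact (hasFiniteIntegral_const r).congr'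
      (hsupp.mono fun x hx => by simp [hx, hr.le])
  have hinner : ∫ x, inner ℝ b x ∂μ = (r : ℝ) ^ 2 := by
    rw [integral_inner hint b, ← hbdef, real_inner_self_eq_norm_sq, hb]
  have hgnonneg : 0 ≤ᵐ[μ] fun x => (r : ℝ) ^ 2 - inner ℝ b x := by
    filter_upwards [hsupp] with x hx
    have h1 : inner ℝ b x ≤ ‖b‖ * ‖x‖ := real_inner_le_norm b x
    rw [hb, hx] at h1
    simp only [Pi.zero_apply]
    nlinarith
  have hgint : Integrable (fun x => (r : ℝ) ^ 2 - inner ℝ b x) μ :=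
    (integrable_const _).sub (hint.const_inner b)
  have hgzero : ∫ x, ((r : ℝ) ^ 2 - inner ℝ b x) ∂μ = 0 := by
    rw [integral_sub (integrable_const _) (hint.const_inner b), hinner,
      integral_const]
    simp
  have hae : (fun x => (r : ℝ) ^ 2 - inner ℝ b x) =ᵐ[μ] 0 :=
    (integral_eq_zero_iff_of_nonneg_ae hgnonneg hgint).mp hgzero
  have haeb : ∀ᵐ x ∂μ, x = b := by
    filter_upwards [hae, hsupp] with x hx hnx
    have hib : inner ℝ b x = (r : ℝ) ^ 2 := by
      simp only [Pi.zero_apply] at hx; linarith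
    have hsq : ‖x - b‖ ^ 2 = 0 := by
      rw [norm_sub_sq_real, hnx, hb, real_inner_comm, hib]; ring
    have := pow_eq_zero_iff (n := 2) (by norm_num) |>.mp hsq
    rwa [norm_eq_zero, sub_eq_zero] at this
  have hcompl : μ {b}ᶜ = 0 := by
    have := haeb
    rw [ae_iff] at this
    convert this using 2
    ext; simp
  ext s hs
  rw [Measure.dirac_apply' _ hs]
  by_cases hbs : b ∈ s
  · have hsc : μ sᶜ = 0 :=
      measure_mono_null (fun x hx (hxb : x = b) => hx (hxb ▸ hbs)) hcompl
    have h1 : μ s + μ sᶜ = 1 := by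
      rw [measure_add_measure_compl hs, measure_univ]
    rw [hsc, add_zero] at h1
    simp [h1, Set.indicator_of_mem hbs]
  · have hsz : μ s = 0 :=
      measure_mono_null (fun x hx (hxb : x = b) => hbs (hxb ▸ hx)) hcompl
    simp [hsz, Set.indicator_of_notMem hbs]
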